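/- Assume Φ(f) lies in the center of ℰ⁻ for every tail-measurable f, and that Φ(f·χ_Δ) = Φ(f)Φ(χ_Δ) for all cylinder sets Δ. Then for every nonnegative f ∈ ℒ_∞ and every normal state ω on ℰ⁻, the positive normal functional Φ(f)^*(ω) defined by Φ(f)^*(ω)(A) := ω(Φ(f)^{1/2} A Φ(f)^{1/2}) satisfies μ_{Φ(f)^*(ω)} = μ_ω^f, where μ_ω^f(Δ) := ∫_Ξ f·χ_Δ dμ_ω for Δ ∈ Σ. In particular, if ω(Φ(f)) ≠ 0, then ω^f := ω(Φ(f))^{-1} Φ(f)^*(ω) is a normal state on ℰ⁻ whose associated LSW measure is the normalized f-weighted measure. -/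

import Mathlib

open MeasureTheory Filter
open scoped ENNReal NNReal BigOperators

noncomputable section

/-- A normal state given by a density matrix, presented through a (sub-)orthonormal family
of vectors `ψ i` with `∑ ‖ψ i‖² = 1`:  `ω(A) = ∑ ⟪ψ i, A ψ i⟫`. -/
structure DensityState (H : Type*) [NormedAddCommGroup H] [InnerProductSpace ℂ H] where
  ψ : ℕ → H
  summable' : Summable fun i => ‖ψ i‖ ^ 2
  norm_one : ∑' i, ‖ψ i‖ ^ 2 = 1

/-- The value `ω(A) = tr(P_ω A)` of a normal state on an operator. -/
def DensityState.val {H : Type*} [NormedAddCommGroup H] [InnerProductSpace ℂ H]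
    (ω : DensityState H) (A : H →L[ℂ] H) : ℂ :=
  ∑' i, @inner ℂ H _ (ω.ψ i) (A (ω.ψ i))

/-- The cylinder set of histories whose first `n` outcomes are `v`. -/
def cyl {𝒳 : Type*} {n : ℕ} (v : Fin n → 𝒳) : Set (ℕ → 𝒳) :=
  {x | ∀ i : Fin n, x (i : ℕ) = v i}

/-- `Π_{ξ^{(m,n)}} = π_{ξ_m}(m) ⋯ π_{ξ_{n-1}}(n-1)` (half-open convention `[m,n)`). -/
def blockOp {H 𝒳 : Type*} [NormedAddCommGroup H] [InnerProductSpace ℂ H]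
    (π : ℕ → 𝒳 → (H →L[ℂ] H)) (m n : ℕ) (ξ : ℕ → 𝒳) : H →L[ℂ] H :=
  ((List.range' m (n - m)).map fun k => π k (ξ k)).prod

/-- `Π_{ξ^{(n)}} = π_{ξ₁}(1) ⋯ π_{ξ_n}(n)` for the first `n` outcomes `v`. -/
def histOp {H 𝒳 : Type*} [NormedAddCommGroup H] [InnerProductSpace ℂ H]
    (π : ℕ → 𝒳 → (H →L[ℂ] H)) {n : ℕ} (v : Fin n → 𝒳) : H →L[ℂ] H :=
  (List.ofFn fun i : Fin n => π (i : ℕ) (v i)).prod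

/-- `μ` is the LSW measure of the functional `φ`:
`μ(ξ₁,…,ξ_n) = φ(Π_{ξ^{(n)}} (Π_{ξ^{(n)}})^*)`. -/
def IsLSW {H 𝒳 : Type*} [NormedAddCommGroup H] [InnerProductSpace ℂ H] [CompleteSpace H]
    [MeasurableSpace 𝒳] (π : ℕ → 𝒳 → (H →L[ℂ] H)) (φ : (H →L[ℂ] H) → ℂ)
    (μ : Measure (ℕ → 𝒳)) : Prop :=
  ∀ (n : ℕ) (v : Fin n → 𝒳),
    μ (cyl v) = ENNReal.ofReal (φ (histOp π v * star (histOp π v))).re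

def shiftAlg (𝒳 : Type*) [MeasurableSpace 𝒳] (n : ℕ) : MeasurableSpace (ℕ → 𝒳) :=
  MeasurableSpace.comap (fun (x : ℕ → 𝒳) (i : ℕ) => x (i + n))
    (inferInstance : MeasurableSpace (ℕ → 𝒳))

def tailAlg (𝒳 : Type*) [MeasurableSpace 𝒳] : MeasurableSpace (ℕ → 𝒳) :=
  ⨅ n : ℕ, shiftAlg 𝒳 n

def IsCylinder {𝒳 : Type*} (S : Set (ℕ → 𝒳)) : Prop :=
  ∃ (n : ℕ) (Λ : Set (Fin n → 𝒳)), S = {x | (fun i : Fin n => x (i : ℕ)) ∈ Λ}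


-- ===== Auxiliary lemmas =====

set_option maxHeartbeats 1000000 in
set_option synthInstance.maxHeartbeats 400000 in
/-- Anything commuting with a selfadjoint operator commutes with its real continuous
functional calculus. -/
lemma aux_commute_cfc_real {H : Type*} [NormedAddCommGroup H] [InnerProductSpace ℂ H]
    [CompleteSpace H] (a b : H →L[ℂ] H) (ha : IsSelfAdjoint a) (hab : Commute a b)
    (g : ℝ → ℝ) : Commute (cfc g a) b := by
  by_cases hg : ContinuousOn g (spectrum ℝ a)
  · rw [cfc_apply g a ha hg]
    set φ : C(spectrum ℝ a, ℝ) →⋆ₐ[ℝ] (H →L[ℂ] H) := cfcHom ha with hφ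
    have hφc : Continuous φ := cfcHom_continuous ha
    set Z : Subalgebra ℝ (H →L[ℂ] H) := Subalgebra.centralizer ℝ {b} with hZ
    have hZc : IsClosed (Z : Set (H →L[ℂ] H)) := by
      have : (Z : Set (H →L[ℂ] H)) = (fun x => b * x - x * b) ⁻¹' {0} := by
        ext x
        simp only [hZ, Subalgebra.coe_centralizer, Set.mem_centralizer_iff,
          Set.mem_singleton_iff, Set.mem_preimage, sub_eq_zero]
        constructor
        · intro h; exact h b rfl
        · rintro h m rfl; exact h
      rw [this]
      exact isClosed_singleton.preimage (by continuity)
    have hmem : ∀ x ∈ polynomialFunctions (spectrum ℝ a), φ x ∈ Z := by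
      intro x hx
      have hP : polynomialFunctions (spectrum ℝ a) ≤ Z.comap φ.toAlgHom := by
        rw [polynomialFunctions.eq_adjoin_X]
        apply Algebra.adjoin_le
        rintro y hy
        rw [Set.mem_singleton_iff] at hy
        subst hy
        have hid : (Polynomial.toContinuousMapOnAlgHom (spectrum ℝ a) Polynomial.X)
            = (ContinuousMap.id ℝ).restrict (spectrum ℝ a) := by
          ext x; simp
        rw [SetLike.mem_coe, Subalgebra.mem_comap, hid]
        show φ _ ∈ Z
        rw [hφ, cfcHom_id ha]
        intro m hm
        rw [Set.mem_singleton_iff] at hm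
        subst hm
        exact hab.symm
      exact hP hx
    have hdense : (⟨_, hg.restrict⟩ : C(spectrum ℝ a, ℝ)) ∈
        closure (polynomialFunctions (spectrum ℝ a) : Set C(spectrum ℝ a, ℝ)) := by
      have h2 := polynomialFunctions.topologicalClosure (spectrum ℝ a)
      have h3 : (⟨_, hg.restrict⟩ : C(spectrum ℝ a, ℝ)) ∈
          (polynomialFunctions (spectrum ℝ a)).topologicalClosure := h2 ▸ Algebra.mem_top
      exact h3
    have hsub : closure (polynomialFunctions (spectrum ℝ a) : Set C(spectrum ℝ a, ℝ))
        ⊆ φ ⁻¹' (Z : Set (H →L[ℂ] H)) :=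
      closure_minimal (fun x hx => hmem x hx) (hZc.preimage hφc)
    have hZmem : φ ⟨_, hg.restrict⟩ ∈ Z := hsub hdense
    exact (hZmem b rfl).symm
  · rw [cfc_apply_of_not_continuousOn a hg]
    exact Commute.zero_left b

set_option maxHeartbeats 1000000 in
set_option synthInstance.maxHeartbeats 400000 in
lemma aux_sqrt_eq_cfc_real {H : Type*} [NormedAddCommGroup H] [InnerProductSpace ℂ H]
    [CompleteSpace H] (a : H →L[ℂ] H) (ha : 0 ≤ a) : CFC.sqrt a = cfc Real.sqrt a := by
  have h1 : (fun x : ℝ => ((NNReal.sqrt x.toNNReal : ℝ≥0) : ℝ)) = Real.sqrt := by funext x; rw [Real.sqrt]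
  rw [CFC.sqrt_eq_real_sqrt a ha, cfcₙ_eq_cfc]

/-- The vector state attached to a unit vector. -/
def vecState {H : Type*} [NormedAddCommGroup H] [InnerProductSpace ℂ H]
    (ψ : H) (h : ‖ψ‖ = 1) : DensityState H where
  ψ := fun i => if i = 0 then ψ else 0
  summable' := by
    apply summable_of_ne_finset_zero (s := {0})
    intro i hi
    simp only [Finset.mem_singleton] at hi
    simp [hi]
  norm_one := by
    rw [tsum_eq_single 0 (by intro i hi; simp [hi])]
    simp [h]

lemma vecState_val {H : Type*} [NormedAddCommGroup H] [InnerProductSpace ℂ H]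
    (ψ : H) (h : ‖ψ‖ = 1) (A : H →L[ℂ] H) :
    (vecState ψ h).val A = @inner ℂ H _ ψ (A ψ) := by
  rw [DensityState.val, tsum_eq_single 0 (by intro i hi; simp [vecState, hi])]
  simp [vecState]

lemma aux_inner_eq_of_unit {H : Type*} [NormedAddCommGroup H] [InnerProductSpace ℂ H]
    {A B : H →L[ℂ] H}
    (h : ∀ ψ : H, ‖ψ‖ = 1 → @inner ℂ H _ ψ (A ψ) = @inner ℂ H _ ψ (B ψ)) :
    ∀ x : H, @inner ℂ H _ x (A x) = @inner ℂ H _ x (B x) := by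
  intro x
  rcases eq_or_ne x 0 with rfl | hx
  · simp
  · have hc : ((‖x‖ : ℂ)) ≠ 0 := by
      simpa [Complex.ofReal_ne_zero] using norm_ne_zero_iff.mpr hx
    have hu : ‖((‖x‖ : ℂ))⁻¹ • x‖ = 1 := by
      rw [norm_smul, norm_inv, Complex.norm_real, Real.norm_eq_abs,
        abs_of_nonneg (norm_nonneg x), inv_mul_cancel₀ (norm_ne_zero_iff.mpr hx)]
    have key := h _ hu
    rw [A.map_smul, B.map_smul, inner_smul_left, inner_smul_left,
      inner_smul_right, inner_smul_right] at key
    have hc' : (starRingEnd ℂ) ((‖x‖ : ℂ))⁻¹ ≠ 0 := by simpa using hc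
    exact mul_left_cancel₀ (inv_ne_zero hc) (mul_left_cancel₀ hc' key)

lemma aux_ext_of_inner_unit {H : Type*} [NormedAddCommGroup H] [InnerProductSpace ℂ H]
    {A B : H →L[ℂ] H}
    (h : ∀ ψ : H, ‖ψ‖ = 1 → @inner ℂ H _ ψ (A ψ) = @inner ℂ H _ ψ (B ψ)) : A = B := by
  have h' := aux_inner_eq_of_unit h
  have key : ∀ x : H, @inner ℂ H _ (((A - B : H →L[ℂ] H) : H →ₗ[ℂ] H) x) x = 0 := by
    intro x
    have : @inner ℂ H _ ((A - B) x) x = 0 := by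
      rw [ContinuousLinearMap.sub_apply, inner_sub_left, ← inner_conj_symm (A x) x,
        ← inner_conj_symm (B x) x, h' x, sub_self]
    simpa using this
  have h0 : ((A - B : H →L[ℂ] H) : H →ₗ[ℂ] H) = 0 := (inner_map_self_eq_zero _).mp key
  have : A - B = 0 := by
    ext x
    simpa using LinearMap.congr_fun h0 x
  exact sub_eq_zero.mp this

lemma cyl_zero {𝒳 : Type*} (v : Fin 0 → 𝒳) : cyl v = Set.univ := by
  ext x; simp [cyl]

lemma measurableSet_cyl {𝒳 : Type*} [MeasurableSpace 𝒳] [MeasurableSingletonClass 𝒳]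
    {n : ℕ} (v : Fin n → 𝒳) : MeasurableSet (cyl v) := by
  have : cyl v = ⋂ i : Fin n, (fun x : ℕ → 𝒳 => x (i : ℕ)) ⁻¹' {v i} := by
    ext x; simp [cyl]
  rw [this]
  exact MeasurableSet.iInter fun i => (measurable_pi_apply _) (measurableSet_singleton _)

lemma isCylinder_cyl {𝒳 : Type*} {n : ℕ} (v : Fin n → 𝒳) : IsCylinder (cyl v) := by
  refine ⟨n, {v}, ?_⟩
  ext x
  simp only [cyl, Set.mem_setOf_eq, Set.mem_singleton_iff, funext_iff]

lemma aux_inner_mul_star_self {H : Type*} [NormedAddCommGroup H] [InnerProductSpace ℂ H]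
    [CompleteSpace H] (T : H →L[ℂ] H) (ψ : H) :
    @inner ℂ H _ ψ ((T * star T) ψ)
      = ((‖(ContinuousLinearMap.adjoint T) ψ‖ ^ 2 : ℝ) : ℂ) := by
  rw [ContinuousLinearMap.mul_apply, ContinuousLinearMap.star_eq_adjoint,
    ← ContinuousLinearMap.adjoint_inner_left, inner_self_eq_norm_sq_to_K]
  norm_cast

lemma tailAlg_le (𝒳 : Type*) [MeasurableSpace 𝒳] :
    tailAlg 𝒳 ≤ (inferInstance : MeasurableSpace (ℕ → 𝒳)) := by
  have h := iInf_le (shiftAlg 𝒳) 0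
  have h2 : shiftAlg 𝒳 0 = (inferInstance : MeasurableSpace (ℕ → 𝒳)) := by
    rw [shiftAlg]
    have : (fun (x : ℕ → 𝒳) (i : ℕ) => x (i + 0)) = id := rfl
    rw [this, MeasurableSpace.comap_id]
  exact h.trans_eq h2

lemma histOp_mem {H 𝒳 : Type*} [NormedAddCommGroup H] [InnerProductSpace ℂ H]
    (π : ℕ → 𝒳 → (H →L[ℂ] H)) [CompleteSpace H] (E : VonNeumannAlgebra H)
    (hE : ∀ k x, π k x ∈ E) {n : ℕ} (v : Fin n → 𝒳) : histOp π v ∈ E := by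
  apply list_prod_mem
  intro x hx
  rw [List.mem_ofFn] at hx
  obtain ⟨i, rfl⟩ := hx
  exact hE _ _

/-- for nonnegative tail-measurable `f` and a normal state `ω`, the functional
`Φ(f)^*(ω) : A ↦ ω(Φ(f)^{1/2} A Φ(f)^{1/2})` has LSW measure `μ_ω^f = f·μ_ω`; normalizing
by `ω(Φ(f)) ≠ 0` yields a state whose LSW measure is the normalized `f`-weighted measure. -/
theorem dual_functional_measure
    {H 𝒳 : Type*} [NormedAddCommGroup H] [InnerProductSpace ℂ H] [CompleteSpace H]
    [TopologicalSpace.SeparableSpace H]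
    [Fintype 𝒳] [Nonempty 𝒳] [MeasurableSpace 𝒳] [MeasurableSingletonClass 𝒳]
    (π : ℕ → 𝒳 → (H →L[ℂ] H))
    (hsa : ∀ k x, IsSelfAdjoint (π k x)) (hid : ∀ k x, IsIdempotentElem (π k x))
    (hsum : ∀ k, ∑ x : 𝒳, π k x = 1)
    (E : VonNeumannAlgebra H) (hE : ∀ k x, π k x ∈ E)
    (μ : DensityState H → Measure (ℕ → 𝒳))
    (hμ : ∀ ω : DensityState H, IsLSW π ω.val (μ ω))
    (Φ : ((ℕ → 𝒳) → ℂ) → (H →L[ℂ] H))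
    (hΦ : ∀ f : (ℕ → 𝒳) → ℂ, Measurable f → (∃ C, ∀ ξ, ‖f ξ‖ ≤ C) →
      ∀ ω : DensityState H, ω.val (Φ f) = ∫ ξ, f ξ ∂(μ ω))
    -- Φ(f) is central in ℰ⁻ for every bounded tail-measurable f:
    (hcentral : ∀ f : (ℕ → 𝒳) → ℂ, @Measurable _ _ (tailAlg 𝒳) _ f →
      (∃ C, ∀ ξ, ‖f ξ‖ ≤ C) → ∀ B ∈ E, Φ f * B = B * Φ f)
    -- Φ(f·χ_Δ) = Φ(f)Φ(χ_Δ) for cylinder sets Δ: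
    (hmul : ∀ f : (ℕ → 𝒳) → ℂ, @Measurable _ _ (tailAlg 𝒳) _ f →
      (∃ C, ∀ ξ, ‖f ξ‖ ≤ C) → ∀ Δ : Set (ℕ → 𝒳), IsCylinder Δ →
        Φ (fun ξ => f ξ * Set.indicator Δ (fun _ => (1 : ℂ)) ξ)
          = Φ f * Φ (Set.indicator Δ (fun _ => (1 : ℂ))))
    -- data: nonnegative bounded tail-measurable f and a normal state ω:
    (f : (ℕ → 𝒳) → ℝ) (hf0 : ∀ ξ, 0 ≤ f ξ)
    (hf : @Measurable _ _ (tailAlg 𝒳) _ f) (C : ℝ) (hC : ∀ ξ, ‖f ξ‖ ≤ C)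
    (ω : DensityState H) :
    IsLSW π
      (fun A => ω.val (CFC.sqrt (Φ (fun ξ => (f ξ : ℂ))) * A
        * CFC.sqrt (Φ (fun ξ => (f ξ : ℂ)))))
      ((μ ω).withDensity fun ξ => ENNReal.ofReal (f ξ)) ∧
    (ω.val (Φ (fun ξ => (f ξ : ℂ))) ≠ 0 →
      IsLSW π
        (fun A => (ω.val (Φ (fun ξ => (f ξ : ℂ))))⁻¹
          * ω.val (CFC.sqrt (Φ (fun ξ => (f ξ : ℂ))) * A
            * CFC.sqrt (Φ (fun ξ => (f ξ : ℂ)))))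
        (((((μ ω).withDensity fun ξ => ENNReal.ofReal (f ξ)) Set.univ)⁻¹
          • ((μ ω).withDensity fun ξ => ENNReal.ofReal (f ξ))))) := by
  classical
  set F := Φ (fun ξ => (f ξ : ℂ)) with hFdef
  have htail_le := tailAlg_le 𝒳
  have hfm : Measurable f := hf.mono htail_le le_rfl
  have hfcm : Measurable (fun ξ => (f ξ : ℂ)) := Complex.measurable_ofReal.comp hfm
  have hfc_tail : @Measurable _ _ (tailAlg 𝒳) _ (fun ξ => (f ξ : ℂ)) :=
    Complex.measurable_ofReal.comp hf
  have hfcb : ∃ C', ∀ ξ, ‖(f ξ : ℂ)‖ ≤ C' := ⟨C, fun ξ => by simpa using hC ξ⟩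
  -- all LSW measures are finite
  have hfinite : ∀ ω' : DensityState H, IsFiniteMeasure (μ ω') := by
    intro ω'
    constructor
    have h0 := hμ ω' 0 (fun i => i.elim0)
    rw [cyl_zero] at h0
    rw [h0]
    exact ENNReal.ofReal_lt_top
  haveI : IsFiniteMeasure (μ ω) := hfinite ω
  have hint : Integrable f (μ ω) :=
    ⟨hfm.aestronglyMeasurable, HasFiniteIntegral.of_bounded (C := C) (ae_of_all _ hC)⟩
  -- values of vector states on `F` are nonnegative reals
  have hvec : ∀ (ψ : H) (h1 : ‖ψ‖ = 1), ∃ r : ℝ, 0 ≤ r ∧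
      @inner ℂ H _ ψ (F ψ) = (r : ℂ) := by
    intro ψ h1
    refine ⟨∫ ξ, f ξ ∂(μ (vecState ψ h1)), integral_nonneg hf0, ?_⟩
    rw [← vecState_val ψ h1 F, hFdef, hΦ _ hfcm hfcb (vecState ψ h1)]
    exact integral_ofReal
  have hreal : ∀ x : H, ∃ r : ℝ, 0 ≤ r ∧ @inner ℂ H _ x (F x) = (r : ℂ) := by
    intro x
    rcases eq_or_ne x 0 with rfl | hx
    · exact ⟨0, le_rfl, by simp⟩
    · have hc : ((‖x‖ : ℂ)) ≠ 0 := by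
        simpa [Complex.ofReal_ne_zero] using norm_ne_zero_iff.mpr hx
      have hu : ‖((‖x‖ : ℂ))⁻¹ • x‖ = 1 := by
        rw [norm_smul, norm_inv, Complex.norm_real, Real.norm_eq_abs,
          abs_of_nonneg (norm_nonneg x), inv_mul_cancel₀ (norm_ne_zero_iff.mpr hx)]
      obtain ⟨r, hr0, hr⟩ := hvec _ hu
      refine ⟨‖x‖ ^ 2 * r, mul_nonneg (sq_nonneg _) hr0, ?_⟩
      have hxu : x = (‖x‖ : ℂ) • (((‖x‖ : ℂ))⁻¹ • x) := (smul_inv_smul₀ hc x).symm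
      calc @inner ℂ H _ x (F x)
          = @inner ℂ H _ ((‖x‖ : ℂ) • (((‖x‖ : ℂ))⁻¹ • x))
              (F ((‖x‖ : ℂ) • (((‖x‖ : ℂ))⁻¹ • x))) := by rw [← hxu]
        _ = (starRingEnd ℂ) (‖x‖ : ℂ) * ((‖x‖ : ℂ) *
              @inner ℂ H _ (((‖x‖ : ℂ))⁻¹ • x) (F (((‖x‖ : ℂ))⁻¹ • x))) := by
            rw [F.map_smul, inner_smul_left, inner_smul_right]
        _ = ((‖x‖ ^ 2 * r : ℝ) : ℂ) := by
            rw [hr, Complex.conj_ofReal]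
            push_cast
            ring
  have hFpos : F.IsPositive := by
    rw [ContinuousLinearMap.isPositive_iff_complex]
    intro x
    obtain ⟨r, hr0, hr⟩ := hreal x
    have hFx : @inner ℂ H _ (F x) x = (r : ℂ) := by
      rw [← inner_conj_symm (F x) x, hr, Complex.conj_ofReal]
    constructor
    · rw [hFx]; simp
    · rw [hFx]; simpa using hr0
  have hF0 : 0 ≤ F := (ContinuousLinearMap.nonneg_iff_isPositive F).mpr hFpos
  have hFsa : IsSelfAdjoint F := hFpos.isSelfAdjoint
  -- Φ of cylinder indicators
  have hind_meas : ∀ {n : ℕ} (v : Fin n → 𝒳),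
      Measurable (Set.indicator (cyl v) (fun _ => (1 : ℂ))) := by
    intro n v
    exact measurable_const.indicator (measurableSet_cyl v)
  have hind_bd : ∀ {n : ℕ} (v : Fin n → 𝒳),
      ∃ C', ∀ ξ, ‖Set.indicator (cyl v) (fun _ => (1 : ℂ)) ξ‖ ≤ C' := by
    intro n v
    refine ⟨1, fun ξ => ?_⟩
    by_cases h : ξ ∈ cyl v <;> simp [h]
  have hχ : ∀ {n : ℕ} (v : Fin n → 𝒳),
      Φ (Set.indicator (cyl v) (fun _ => (1 : ℂ)))
        = histOp π v * star (histOp π v) := by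
    intro n v
    apply aux_ext_of_inner_unit
    intro ψ h1
    have h2 := (vecState_val ψ h1 (Φ (Set.indicator (cyl v) (fun _ => (1 : ℂ))))).symm
    rw [h2, hΦ _ (hind_meas v) (hind_bd v) (vecState ψ h1),
      integral_indicator_const (1 : ℂ) (measurableSet_cyl v)]
    have h3 := hμ (vecState ψ h1) n v
    have h4 := aux_inner_mul_star_self (histOp π v) ψ
    have h5 : (vecState ψ h1).val (histOp π v * star (histOp π v))
        = ((‖(ContinuousLinearMap.adjoint (histOp π v)) ψ‖ ^ 2 : ℝ) : ℂ) := by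
      rw [vecState_val]; exact h4
    rw [h5] at h3
    rw [measureReal_def, h3]
    simp only [Complex.ofReal_re, smul_eq_mul, mul_one]
    rw [ENNReal.toReal_ofReal (sq_nonneg _), Complex.real_smul, mul_one]
    exact h4.symm
  -- the key computation
  have key : ∀ (n : ℕ) (v : Fin n → 𝒳),
      ω.val (CFC.sqrt F * (histOp π v * star (histOp π v)) * CFC.sqrt F)
        = ((∫ ξ in cyl v, f ξ ∂(μ ω) : ℝ) : ℂ) := by
    intro n v
    set P := histOp π v * star (histOp π v) with hP
    have hPE : P ∈ E := mul_mem (histOp_mem π E hE v) (star_mem (histOp_mem π E hE v))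
    have hFP : Commute F P := hcentral _ hfc_tail hfcb P hPE
    have hcomm : Commute (CFC.sqrt F) P := by
      rw [aux_sqrt_eq_cfc_real F hF0]
      exact aux_commute_cfc_real F P hFsa hFP Real.sqrt
    have hop : CFC.sqrt F * P * CFC.sqrt F = F * P := by
      rw [hcomm.eq, mul_assoc, CFC.sqrt_mul_sqrt_self F hF0, ← hFP.eq]
    rw [hop]
    have hm1 : Φ (fun ξ => (f ξ : ℂ) * Set.indicator (cyl v) (fun _ => (1 : ℂ)) ξ)
        = F * P := by
      rw [hmul _ hfc_tail hfcb (cyl v) (isCylinder_cyl v), hχ v, hFdef]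
    rw [← hm1]
    have hmeas : Measurable (fun ξ => (f ξ : ℂ) * Set.indicator (cyl v) (fun _ => (1 : ℂ)) ξ) :=
      hfcm.mul (hind_meas v)
    have hbd : ∃ C', ∀ ξ, ‖(f ξ : ℂ) * Set.indicator (cyl v) (fun _ => (1 : ℂ)) ξ‖ ≤ C' := by
      refine ⟨C, fun ξ => ?_⟩
      rw [norm_mul]
      calc ‖(f ξ : ℂ)‖ * ‖Set.indicator (cyl v) (fun _ => (1 : ℂ)) ξ‖
          ≤ ‖(f ξ : ℂ)‖ * 1 := by
            apply mul_le_mul_of_nonneg_left _ (norm_nonneg _)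
            obtain ⟨C', hC'⟩ := hind_bd v
            by_cases h : ξ ∈ cyl v <;> simp [h]
        _ = ‖f ξ‖ := by simp
        _ ≤ C := hC ξ
    rw [hΦ _ hmeas hbd ω]
    have hptwise : (fun ξ => (f ξ : ℂ) * Set.indicator (cyl v) (fun _ => (1 : ℂ)) ξ)
        = fun ξ => ((Set.indicator (cyl v) f ξ : ℝ) : ℂ) := by
      funext ξ
      by_cases h : ξ ∈ cyl v <;> simp [Set.indicator_of_mem, Set.indicator_of_notMem, h]
    rw [hptwise]
    have hOR : ∫ ξ, ((Set.indicator (cyl v) f ξ : ℝ) : ℂ) ∂(μ ω)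
        = ((∫ ξ, Set.indicator (cyl v) f ξ ∂(μ ω) : ℝ) : ℂ) := integral_ofReal
    rw [hOR, integral_indicator (measurableSet_cyl v)]
  have keymeas : ∀ (n : ℕ) (v : Fin n → 𝒳),
      ((μ ω).withDensity fun ξ => ENNReal.ofReal (f ξ)) (cyl v)
        = ENNReal.ofReal (∫ ξ in cyl v, f ξ ∂(μ ω)) := by
    intro n v
    rw [withDensity_apply _ (measurableSet_cyl v)]
    exact (ofReal_integral_eq_lintegral_ofReal hint.restrict (ae_of_all _ hf0)).symm
  constructor
  · intro n v
    rw [keymeas n v]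
    simp only
    rw [key n v, Complex.ofReal_re]
  · intro hne n v
    have hr : ω.val F = ((∫ ξ, f ξ ∂(μ ω) : ℝ) : ℂ) := by
      rw [hFdef, hΦ _ hfcm hfcb ω]
      exact integral_ofReal
    set r := ∫ ξ, f ξ ∂(μ ω) with hrdef
    have hr0 : 0 ≤ r := integral_nonneg hf0
    have hrne : r ≠ 0 := by
      intro h0
      apply hne
      show ω.val F = 0
      rw [hr, h0, Complex.ofReal_zero]
    have hrpos : 0 < r := lt_of_le_of_ne hr0 (Ne.symm hrne)
    have hs0 : 0 ≤ ∫ ξ in cyl v, f ξ ∂(μ ω) := integral_nonneg hf0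
    have hνuniv : ((μ ω).withDensity fun ξ => ENNReal.ofReal (f ξ)) Set.univ
        = ENNReal.ofReal r := by
      rw [withDensity_apply _ MeasurableSet.univ, Measure.restrict_univ]
      exact (ofReal_integral_eq_lintegral_ofReal hint (ae_of_all _ hf0)).symm
    rw [Measure.smul_apply, smul_eq_mul, hνuniv, keymeas n v]
    simp only
    rw [key n v]
    show (ENNReal.ofReal r)⁻¹ * ENNReal.ofReal (∫ ξ in cyl v, f ξ ∂(μ ω))
      = ENNReal.ofReal (((ω.val F)⁻¹ * ((∫ ξ in cyl v, f ξ ∂(μ ω) : ℝ) : ℂ)).re)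
    rw [hr]
    have hcast : ((r : ℂ))⁻¹ * ((∫ ξ in cyl v, f ξ ∂(μ ω) : ℝ) : ℂ)
        = ((r⁻¹ * ∫ ξ in cyl v, f ξ ∂(μ ω) : ℝ) : ℂ) := by
      push_cast
      ring
    rw [hcast, Complex.ofReal_re, ENNReal.ofReal_mul (inv_nonneg.mpr hr0),
      ENNReal.ofReal_inv_of_pos hrpos]
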